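/- Convergence of rearranged partial products: let g(z) = ∏_{n=1}^∞ (1 − z/γ_n) exp(∑_{r=1}^p r^{-1}(z/γ_n)^r) be a canonical product of genus p (so ∑ |γ_n|^{-(1+p)} < ∞), and suppose the ordering of the roots satisfies lim_{N→∞} ∑_{n=1}^N γ_n^{-r} = 0 for each r = 1,…,p. Then the plain partial products f_N(z) = ∏_{n=1}^N (1 − z/γ_n) converge to g(z) uniformly on compact subsets of ℂ. -/

import Mathlib

open Filter Finset

theorem rearranged_partial_products_converge (p : ℕ) (γ : ℕ → ℂ)
    (hγ : ∀ n, γ n ≠ 0)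
    (hgenus : Summable (fun n => (1 / ‖γ n‖) ^ (p + 1)))
    (g : ℂ → ℂ)
    (hg : TendstoLocallyUniformly
      (fun N z => ∏ n ∈ range N,
        (1 - z / γ n) * Complex.exp (∑ r ∈ Icc 1 p, (r : ℂ)⁻¹ * (z / γ n) ^ r))
      g atTop)
    (hV : ∀ r ∈ Icc 1 p,
      Tendsto (fun N => ∑ n ∈ range N, (γ n)⁻¹ ^ r) atTop (nhds 0)) :
    TendstoLocallyUniformly (fun N z => ∏ n ∈ range N, (1 - z / γ n)) g atTop := by
  set G : ℕ → ℂ → ℂ := fun N z => ∏ n ∈ range N,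
    (1 - z / γ n) * Complex.exp (∑ r ∈ Icc 1 p, (r : ℂ)⁻¹ * (z / γ n) ^ r) with hG
  set S : ℕ → ℂ → ℂ := fun N z =>
    ∑ r ∈ Icc 1 p, (r : ℂ)⁻¹ * z ^ r * ∑ n ∈ range N, (γ n)⁻¹ ^ r with hS
  have hE : (fun N z => ∏ n ∈ range N, (1 - z / γ n)) =
      fun N z => G N z * Complex.exp (-(S N z)) := by
    funext N z
    have hsum : ∑ n ∈ range N, ∑ r ∈ Icc 1 p, (r : ℂ)⁻¹ * (z / γ n) ^ r = S N z := by
      rw [Finset.sum_comm, hS]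
      refine Finset.sum_congr rfl fun r _ => ?_
      rw [Finset.mul_sum]
      refine Finset.sum_congr rfl fun n _ => ?_
      rw [div_pow, inv_pow]
      ring
    rw [hG]
    simp only [Finset.prod_mul_distrib, ← Complex.exp_sum, hsum, mul_assoc,
      ← Complex.exp_add, add_neg_cancel, Complex.exp_zero, mul_one]
  rw [hE]
  rw [tendstoLocallyUniformly_iff_forall_isCompact] at hg ⊢
  intro K hK
  have hgK := hg K hK
  -- bound on K
  obtain ⟨R₀, hR₀⟩ := isBounded_iff_forall_norm_le.mp hK.isBounded
  set R : ℝ := max R₀ 0 with hRdef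
  have hR : ∀ z ∈ K, ‖z‖ ≤ R := fun z hz => (hR₀ z hz).trans (le_max_left _ _)
  have hR0 : (0 : ℝ) ≤ R := le_max_right _ _
  -- continuity of g and bound M
  have hgc : Continuous g := by
    refine (tendstoLocallyUniformly_iff_forall_isCompact.mpr hg).continuous
      (Frequently.of_forall fun N => ?_)
    exact continuous_finset_prod _ fun i _ => by fun_prop
  obtain ⟨M₀, hM₀⟩ := hK.exists_bound_of_continuousOn hgc.continuousOn
  set M : ℝ := max M₀ 1 with hMdef
  have hM : ∀ z ∈ K, ‖g z‖ ≤ M := fun z hz => (hM₀ z hz).trans (le_max_left _ _)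
  have hM1 : (1 : ℝ) ≤ M := le_max_right _ _
  have hMpos : (0 : ℝ) < M := lt_of_lt_of_le one_pos hM1
  -- the uniform bound B N on ‖S N z‖
  set B : ℕ → ℝ := fun N =>
    ∑ r ∈ Icc 1 p, (r : ℝ)⁻¹ * R ^ r * ‖∑ n ∈ range N, (γ n)⁻¹ ^ r‖ with hBdef
  have hB : Tendsto B atTop (nhds 0) := by
    have : Tendsto (fun N => ∑ r ∈ Icc 1 p,
        (r : ℝ)⁻¹ * R ^ r * ‖∑ n ∈ range N, (γ n)⁻¹ ^ r‖) atTop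
        (nhds (∑ r ∈ Icc 1 p, (0 : ℝ))) := by
      refine tendsto_finset_sum _ fun r hr => ?_
      have := ((hV r hr).norm.const_mul ((r : ℝ)⁻¹ * R ^ r))
      simpa using this
    simpa only [Finset.sum_const_zero] using this
  have hSb : ∀ N, ∀ z ∈ K, ‖S N z‖ ≤ B N := by
    intro N z hz
    rw [hS, hBdef]
    refine (norm_sum_le _ _).trans (Finset.sum_le_sum fun r _ => ?_)
    rw [norm_mul, norm_mul, norm_inv, norm_pow, Complex.norm_natCast]
    have h1 : ‖z‖ ^ r ≤ R ^ r := pow_le_pow_left₀ (norm_nonneg z) (hR z hz) r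
    have h2 : (0 : ℝ) ≤ (r : ℝ)⁻¹ := by positivity
    gcongr
  -- ε-argument
  rw [Metric.tendstoUniformlyOn_iff] at hgK ⊢
  intro ε hε
  have hε6 : 0 < ε / 6 := by positivity
  have hδ : 0 < min 1 (ε / (4 * M)) := by positivity
  filter_upwards [hgK (ε / 6) hε6, hB.eventually (gt_mem_nhds hδ)] with N h1 h2 z hz
  have hBlt := h2
  have hB1 : B N < 1 := lt_of_lt_of_le hBlt (min_le_left _ _)
  have hBε : B N < ε / (4 * M) := lt_of_lt_of_le hBlt (min_le_right _ _)
  have hSz : ‖S N z‖ ≤ B N := hSb N z hz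
  have hS1 : ‖S N z‖ ≤ 1 := hSz.trans hB1.le
  -- exp bounds
  have hexp_norm : ‖Complex.exp (-(S N z))‖ ≤ 3 := by
    rw [Complex.norm_exp]
    have h1 : (-(S N z)).re ≤ ‖S N z‖ := by
      calc (-(S N z)).re ≤ ‖-(S N z)‖ := Complex.re_le_norm _
        _ = ‖S N z‖ := by rw [norm_neg]
    calc Real.exp (-(S N z)).re ≤ Real.exp 1 := Real.exp_le_exp.mpr (h1.trans hS1)
      _ ≤ 3 := by
        have := Real.exp_one_lt_d9
        linarith
  have hexp1 : ‖Complex.exp (-(S N z)) - 1‖ ≤ 2 * ‖S N z‖ := by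
    have := Complex.norm_exp_sub_one_le (x := -(S N z)) (by
      rw [norm_neg]; exact hS1)
    simpa using this
  -- the main estimate
  have key : g z - G N z * Complex.exp (-(S N z)) =
      (g z - G N z) * Complex.exp (-(S N z)) + g z * (1 - Complex.exp (-(S N z))) := by
    ring
  rw [dist_eq_norm, key]
  have e1 : ‖(g z - G N z) * Complex.exp (-(S N z))‖ ≤ (ε / 6) * 3 := by
    rw [norm_mul]
    have := h1 z hz
    rw [dist_eq_norm] at this
    exact mul_le_mul this.le hexp_norm (norm_nonneg _) hε6.le
  have e2 : ‖g z * (1 - Complex.exp (-(S N z)))‖ < M * (2 * (ε / (4 * M))) := by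
    rw [norm_mul]
    have h3 : ‖1 - Complex.exp (-(S N z))‖ ≤ 2 * ‖S N z‖ := by
      rw [← norm_neg]; simpa using hexp1
    have h4 : ‖1 - Complex.exp (-(S N z))‖ < 2 * (ε / (4 * M)) :=
      lt_of_le_of_lt h3 (by nlinarith [hSz, hBε])
    calc ‖g z‖ * ‖1 - Complex.exp (-(S N z))‖
        ≤ M * ‖1 - Complex.exp (-(S N z))‖ := by
          have := hM z hz; gcongr
      _ < M * (2 * (ε / (4 * M))) := by
          exact (mul_lt_mul_iff_right₀ hMpos).mpr h4
  calc ‖(g z - G N z) * Complex.exp (-(S N z)) + g z * (1 - Complex.exp (-(S N z)))‖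
      ≤ ‖(g z - G N z) * Complex.exp (-(S N z))‖ + ‖g z * (1 - Complex.exp (-(S N z)))‖ :=
        norm_add_le _ _
    _ < (ε / 6) * 3 + M * (2 * (ε / (4 * M))) := by
        exact add_lt_add_of_le_of_lt e1 e2
    _ = ε / 2 + ε / 2 := by field_simp; ring
    _ = ε := by ring
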